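/- If the directed graph G is a single strongly connected component containing a vertex of out-degree at least two, then the translation flow ψ on Δ has sensitive dependence on initial conditions with sensitivity constant δ = 1/2: for every x ∈ Δ and ε > 0 there exist y ∈ Δ with d(x,y) < ε and t > 0 with d(ψ_t(x), ψ_t(y)) > 1/2. -/

import Mathlib

open scoped Classical
open MeasureTheory

/-- The set of bi-infinite admissible paths in the directed graph with edge relation `E`. -/
def OmegaPaths {V : Type*} (E : V → V → Prop) : Set (ℤ → V) :=
  {u | ∀ i : ℤ, E (u i) (u (i + 1))}

/-- The space `Δ`. -/
def DeltaSpace {V : Type*} (E : V → V → Prop) (h : ℝ) : Set (ℝ → V) :=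
  {x | ∃ u ∈ OmegaPaths E, ∃ τ : ℝ, x = fun t => u ⌊(t + τ) / h⌋}

/-- The metric in integral form. -/
noncomputable def dInt {V : Type*} (h : ℝ) (x y : ℝ → V) : ℝ :=
  (1 / h) * ∫ t : ℝ, (1 / 4 ^ (⌊t / h⌋.natAbs) : ℝ) * (if x t = y t then (0 : ℝ) else 1)

/-- The translation flow. -/
def psiFlow {V : Type*} (t : ℝ) (x : ℝ → V) : ℝ → V := fun s => x (s + t)

open Real Set

lemma myexp_integral {b : ℝ} (hb : 0 < b) (c : ℝ) :
    ∫ x in Ioi c, Real.exp (-b * x) = Real.exp (-b * c) / b := by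
  have hd : ∀ x ∈ Ici c, HasDerivAt (fun y => -(Real.exp (-b * y) / b)) (Real.exp (-b * x)) x := by
    intro x _
    have h0 : HasDerivAt (fun y => -b * y) (-b) x := by
      simpa using (hasDerivAt_id x).const_mul (-b)
    have h1 := ((h0.exp).div_const b).neg
    refine h1.congr_deriv ?_
    field_simp
  have hi : IntegrableOn (fun x => Real.exp (-b * x)) (Ioi c) := exp_neg_integrableOn_Ioi c hb
  have ht : Filter.Tendsto (fun y => -(Real.exp (-b * y) / b)) Filter.atTop (nhds 0) := by
    have h2 : Filter.Tendsto (fun y : ℝ => -b * y) Filter.atTop Filter.atBot := by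
      have := Filter.Tendsto.const_mul_atTop hb (Filter.tendsto_id (α := ℝ) (x := Filter.atTop))
      rw [← Filter.tendsto_neg_atBot_iff] at this
      exact this.congr (by intro x; simp [neg_mul, mul_comm])
    have h3 := (Real.tendsto_exp_atBot.comp h2).div_const b |>.neg
    simpa using h3
  have := integral_Ioi_of_hasDerivAt_of_tendsto' hd hi ht
  rw [this]; ring

lemma weight_le {h : ℝ} (hh : 0 < h) (t : ℝ) :
    (1 / 4 ^ (⌊t / h⌋.natAbs) : ℝ) ≤ 4 * Real.exp (-(Real.log 4 / h) * |t|) := by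
  set n := ⌊t / h⌋ with hn
  set k := n.natAbs with hk
  have h4 : (0:ℝ) < Real.log 4 := Real.log_pos (by norm_num)
  have habs : |t| ≤ (k + 1) * h := by
    have h1 : (n : ℝ) ≤ t / h := Int.floor_le _
    have h2 : t / h < n + 1 := Int.lt_floor_add_one _
    have hk1 : (n:ℝ) ≤ (k:ℝ) := by
      have : n ≤ (k:ℤ) := Int.le_natAbs
      exact_mod_cast this
    have hk2 : -(k:ℝ) ≤ (n:ℝ) := by
      have : -(k:ℤ) ≤ n := by
        rw [hk, ← Int.abs_eq_natAbs]; exact neg_abs_le n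
      exact_mod_cast this
    have h1' : (n:ℝ) * h ≤ t := by rwa [← le_div_iff₀ hh]
    have h2' : t < ((n:ℝ) + 1) * h := by rwa [← div_lt_iff₀ hh]
    rw [abs_le]
    constructor <;> nlinarith
  have e1 : (1 / 4 ^ k : ℝ) = Real.exp (-(k * Real.log 4)) := by
    rw [Real.exp_neg, one_div]
    congr 1
    rw [Real.exp_nat_mul, Real.exp_log (by norm_num : (0:ℝ) < 4)]
  have e2 : (4 : ℝ) * Real.exp (-(Real.log 4 / h) * |t|) =
      Real.exp (Real.log 4 + -(Real.log 4 / h) * |t|) := by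
    rw [Real.exp_add, Real.exp_log (by norm_num : (0:ℝ) < 4)]
  rw [e1, e2]
  apply Real.exp_le_exp.2
  have h3 : (Real.log 4 / h) * |t| ≤ (Real.log 4 / h) * ((k + 1) * h) :=
    mul_le_mul_of_nonneg_left habs (le_of_lt (div_pos h4 hh))
  have h5 : (Real.log 4 / h) * ((k + 1) * h) = (k + 1) * Real.log 4 := by
    field_simp
  nlinarith

lemma integrable_four_exp_abs {a : ℝ} (ha : 0 < a) :
    Integrable (fun t : ℝ => 4 * Real.exp (-a * |t|)) := by
  have h1 : IntegrableOn (fun t : ℝ => Real.exp (-a * |t|)) (Ici 0) := by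
    rw [integrableOn_Ici_iff_integrableOn_Ioi]
    exact (exp_neg_integrableOn_Ioi 0 ha).congr_fun
      (fun x hx => by simp [abs_of_pos (show 0 < x from hx)]) measurableSet_Ioi
  have hF1 : Integrable ((Ici (0:ℝ)).indicator (fun t : ℝ => Real.exp (-a * |t|))) :=
    h1.integrable_indicator measurableSet_Ici
  have hF2 : Integrable (fun t : ℝ =>
      (Ici (0:ℝ)).indicator (fun s : ℝ => Real.exp (-a * |s|)) (-t)) := hF1.comp_neg
  have hcont : Continuous (fun t : ℝ => Real.exp (-a * |t|)) :=
    Real.continuous_exp.comp ((continuous_const.mul continuous_abs))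
  have hmono : Integrable (fun t : ℝ => Real.exp (-a * |t|)) := by
    refine (hF1.add hF2).mono' hcont.aestronglyMeasurable (ae_of_all _ fun t => ?_)
    rw [Real.norm_eq_abs, abs_of_nonneg (Real.exp_pos _).le]
    rcases le_or_gt 0 t with ht | ht
    · have e : (Ici (0:ℝ)).indicator (fun s : ℝ => Real.exp (-a * |s|)) t =
          Real.exp (-a * |t|) := indicator_of_mem ht _
      have hnn : 0 ≤ (Ici (0:ℝ)).indicator (fun s : ℝ => Real.exp (-a * |s|)) (-t) :=
        indicator_nonneg (fun s _ => (Real.exp_pos _).le) _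
      simp only [Pi.add_apply]; linarith [e.ge]
    · have e : (Ici (0:ℝ)).indicator (fun s : ℝ => Real.exp (-a * |s|)) (-t) =
          Real.exp (-a * |(-t)|) := indicator_of_mem (by simpa using ht.le) _
      have hnn : 0 ≤ (Ici (0:ℝ)).indicator (fun s : ℝ => Real.exp (-a * |s|)) t :=
        indicator_nonneg (fun s _ => (Real.exp_pos _).le) _
      simp only [Pi.add_apply, abs_neg] at *
      linarith [e.ge]
  exact hmono.const_mul 4

lemma exists_next {V : Type*} (E : V → V → Prop)
    (hsc : ∀ a b : V, Relation.ReflTransGen E a b)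
    (hdeg : ∃ v a b : V, a ≠ b ∧ E v a ∧ E v b) : ∀ x : V, ∃ y, E x y := by
  obtain ⟨v, a, b, hab, hva, hvb⟩ := hdeg
  intro x
  rcases (hsc x a).cases_head with h | ⟨y, hxy, _⟩
  · rcases (hsc x b).cases_head with h' | ⟨y, hxy, _⟩
    · exact absurd (h ▸ h') hab
    · exact ⟨y, hxy⟩
  · exact ⟨y, hxy⟩

lemma exists_modification {V : Type*} (E : V → V → Prop)
    (hsc : ∀ a b : V, Relation.ReflTransGen E a b)
    (hdeg : ∃ v a b : V, a ≠ b ∧ E v a ∧ E v b)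
    (u : ℤ → V) (hu : u ∈ OmegaPaths E) (N : ℤ) :
    ∃ w ∈ OmegaPaths E, (∀ i ≤ N, w i = u i) ∧ ∃ i₀ > N, w i₀ ≠ u i₀ := by
  classical
  obtain ⟨v, a, b, hab, hva, hvb⟩ := hdeg
  choose next hnext using exists_next E hsc ⟨v, a, b, hab, hva, hvb⟩
  obtain ⟨l, hl, hlast⟩ := List.exists_isChain_cons_of_relationReflTransGen (hsc (u N) v)
  set L : List V := u N :: l with hL
  set k : ℕ := l.length with hk
  have hLlen : L.length = k + 1 := by simp [hL, hk]
  set i₀ : ℤ := N + k + 1 with hi₀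
  set c : V := if u i₀ = a then b else a with hc
  have hcu : c ≠ u i₀ := by
    rw [hc]; split
    · rename_i hh; rw [hh]; exact hab.symm
    · rename_i hh; exact fun e => hh e.symm
  have hvc : E v c := by rw [hc]; split <;> assumption
  set g : ℕ → V := fun j => if hj : j < L.length then L.get ⟨j, hj⟩ else next^[j - L.length] c
    with hg
  have hg0 : g 0 = u N := by simp [hg, hL]
  have hgk : g (k + 1) = c := by
    simp [hg, hLlen]
  have hgE : ∀ j, E (g j) (g (j + 1)) := by
    intro j
    rcases lt_trichotomy (j + 1) L.length with hj | hj | hj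
    · have hj' : j < L.length := by omega
      simp only [hg, dif_pos hj, dif_pos hj']
      have hchain : List.Chain' E L := hl
      exact List.isChain_iff_getElem.1 hchain j (by omega)
    · have hj' : j < L.length := by omega
      have hgj : g j = v := by
        simp only [hg, dif_pos hj']
        rw [← hlast]
        conv_rhs => rw [List.getLast_eq_getElem]
        simp only [List.get_eq_getElem]
        congr 1
        simp only [List.length_cons]
        rw [hLlen] at hj
        omega
      have hgj1 : g (j + 1) = c := by
        simp only [hg, dif_neg (by omega : ¬ j + 1 < L.length)]
        have : j + 1 - L.length = 0 := by omega
        rw [this]; rfl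
      rw [hgj, hgj1]; exact hvc
    · have h1 : ¬ j < L.length := by omega
      have h2 : ¬ j + 1 < L.length := by omega
      simp only [hg, dif_neg h1, dif_neg h2]
      have : j + 1 - L.length = (j - L.length) + 1 := by omega
      rw [this, Function.iterate_succ_apply']
      exact hnext _
  set w : ℤ → V := fun i => if i < N then u i else g (i - N).toNat with hw
  have hwle : ∀ i ≤ N, w i = u i := by
    intro i hi
    rcases eq_or_lt_of_le hi with rfl | hi
    · simp [hw, hg0, show (i - i).toNat = 0 by omega]
    · simp [hw, hi]
  refine ⟨w, ?_, hwle, i₀, by omega, ?_⟩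
  · intro i
    rcases lt_trichotomy (i + 1) N with hi | hi | hi
    · rw [hwle i (by omega), hwle (i+1) (by omega)]; exact hu i
    · rw [hwle i (by omega), hwle (i+1) (by omega)]; exact hu i
    · rcases lt_or_ge i N with hi' | hi'
      · rw [hwle i (by omega), hwle (i+1) (by omega)]; exact hu i
      · have e1 : w i = g (i - N).toNat := by simp [hw, not_lt.2 hi']
        have e2 : w (i + 1) = g ((i - N).toNat + 1) := by
          simp only [hw, if_neg (by omega : ¬ i + 1 < N)]
          congr 1
          omega
        rw [e1, e2]; exact hgE _
  · have : w i₀ = g (k + 1) := by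
      simp only [hw, if_neg (by omega : ¬ i₀ < N)]
      congr 1
      omega
    rw [this, hgk]
    exact hcu

/-- If `G` is a single strongly connected component with some vertex of out-degree at
least two, then the translation flow on `Δ` has sensitive dependence on initial
conditions with sensitivity constant `1/2`. -/
theorem sensitive_dependence {V : Type*} [Fintype V] (E : V → V → Prop) (h : ℝ)
    (hh : 0 < h)
    (hsc : ∀ a b : V, Relation.ReflTransGen E a b)
    (hdeg : ∃ v a b : V, a ≠ b ∧ E v a ∧ E v b) :
    ∀ x ∈ DeltaSpace E h, ∀ ε > (0 : ℝ), ∃ y ∈ DeltaSpace E h,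
      dInt h x y < ε ∧ ∃ t > (0 : ℝ), 1 / 2 < dInt h (psiFlow t x) (psiFlow t y) := by
  intro x hx ε hε
  obtain ⟨u, hu, τ, rfl⟩ := hx
  have hlog4 : (0:ℝ) < Real.log 4 := Real.log_pos (by norm_num)
  set a : ℝ := Real.log 4 / h with ha_def
  have ha : 0 < a := div_pos hlog4 hh
  have hha : h * a = Real.log 4 := by rw [ha_def]; field_simp
  have hT : Filter.Tendsto (fun y : ℝ => (4 / Real.log 4) * Real.exp (-a * y))
      Filter.atTop (nhds 0) := by
    have h2 : Filter.Tendsto (fun y : ℝ => -a * y) Filter.atTop Filter.atBot := by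
      have := Filter.Tendsto.const_mul_atTop ha (Filter.tendsto_id (α := ℝ) (x := Filter.atTop))
      rw [← Filter.tendsto_neg_atBot_iff] at this
      exact this.congr (by intro x; simp [neg_mul, mul_comm])
    have h3 := (Real.tendsto_exp_atBot.comp h2).const_mul (4 / Real.log 4)
    simpa using h3
  obtain ⟨C, hC1, hC2⟩ := ((hT.eventually (gt_mem_nhds hε)).and
      (Filter.eventually_ge_atTop h)).exists
  set N : ℤ := ⌈(C + τ) / h⌉ with hN_def
  have hNh : C + τ ≤ N * h := by
    rw [← div_le_iff₀ hh]
    exact Int.le_ceil _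
  set c : ℝ := (N + 1) * h - τ with hc_def
  have hcC : C + h ≤ c := by rw [hc_def]; nlinarith
  have hc0 : 0 < c := by nlinarith [lt_of_lt_of_le hh hC2]
  obtain ⟨w, hw, hwag, i₀, hi₀N, hwne⟩ := exists_modification E hsc hdeg u hu N
  -- shared facts about the integrand
  have mker : ∀ σ : ℝ, Measurable (fun t : ℝ =>
      (1 / 4 ^ (⌊t / h⌋.natAbs) : ℝ) *
        (if u ⌊(t + σ) / h⌋ = w ⌊(t + σ) / h⌋ then (0:ℝ) else 1)) := by
    intro σ
    have m1 : Measurable fun t : ℝ => (1 / 4 ^ (⌊t / h⌋.natAbs) : ℝ) :=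
      (measurable_of_countable (fun n : ℤ => (1 / 4 ^ n.natAbs : ℝ))).comp
        ((measurable_id.div_const h).floor)
    have m2 : Measurable fun t : ℝ =>
        (if u ⌊(t + σ) / h⌋ = w ⌊(t + σ) / h⌋ then (0:ℝ) else 1) :=
      (measurable_of_countable (fun n : ℤ => if u n = w n then (0:ℝ) else 1)).comp
        (((measurable_id.add_const σ).div_const h).floor)
    exact m1.mul m2
  have hnonneg : ∀ σ t : ℝ,
      0 ≤ (1 / 4 ^ (⌊t / h⌋.natAbs) : ℝ) *
        (if u ⌊(t + σ) / h⌋ = w ⌊(t + σ) / h⌋ then (0:ℝ) else 1) := by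
    intro σ t
    apply mul_nonneg (by positivity)
    split <;> norm_num
  have hbound : ∀ σ t : ℝ,
      (1 / 4 ^ (⌊t / h⌋.natAbs) : ℝ) *
        (if u ⌊(t + σ) / h⌋ = w ⌊(t + σ) / h⌋ then (0:ℝ) else 1)
        ≤ 4 * Real.exp (-a * |t|) := by
    intro σ t
    have h1 := weight_le hh t
    have h2 : (if u ⌊(t + σ) / h⌋ = w ⌊(t + σ) / h⌋ then (0:ℝ) else 1) ≤ 1 := by
      split <;> norm_num
    calc (1 / 4 ^ (⌊t / h⌋.natAbs) : ℝ) *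
        (if u ⌊(t + σ) / h⌋ = w ⌊(t + σ) / h⌋ then (0:ℝ) else 1)
        ≤ (1 / 4 ^ (⌊t / h⌋.natAbs) : ℝ) * 1 :=
          mul_le_mul_of_nonneg_left h2 (by positivity)
      _ = (1 / 4 ^ (⌊t / h⌋.natAbs) : ℝ) := mul_one _
      _ ≤ 4 * Real.exp (-a * |t|) := h1
  have hint : ∀ σ : ℝ, Integrable (fun t : ℝ =>
      (1 / 4 ^ (⌊t / h⌋.natAbs) : ℝ) *
        (if u ⌊(t + σ) / h⌋ = w ⌊(t + σ) / h⌋ then (0:ℝ) else 1)) := by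
    intro σ
    refine (integrable_four_exp_abs ha).mono' (mker σ).aestronglyMeasurable
      (ae_of_all _ fun t => ?_)
    rw [Real.norm_eq_abs, abs_of_nonneg (hnonneg σ t)]
    exact hbound σ t
  refine ⟨fun t => w ⌊(t + τ) / h⌋, ⟨w, hw, τ, rfl⟩, ?_, ?_⟩
  case _ =>
    -- dInt h x y < ε
    have hGint : Integrable ((Ici c).indicator (fun t : ℝ => 4 * Real.exp (-a * t))) := by
      apply IntegrableOn.integrable_indicator _ measurableSet_Ici
      rw [integrableOn_Ici_iff_integrableOn_Ioi]
      exact (exp_neg_integrableOn_Ioi c ha).const_mul 4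
    have hle : ∀ t : ℝ,
        (1 / 4 ^ (⌊t / h⌋.natAbs) : ℝ) *
          (if u ⌊(t + τ) / h⌋ = w ⌊(t + τ) / h⌋ then (0:ℝ) else 1)
        ≤ (Ici c).indicator (fun t : ℝ => 4 * Real.exp (-a * t)) t := by
      intro t
      by_cases he : u ⌊(t + τ) / h⌋ = w ⌊(t + τ) / h⌋
      · rw [if_pos he, mul_zero]
        exact indicator_nonneg (fun s _ => by positivity) t
      · have hN' : N < ⌊(t + τ) / h⌋ := by
          by_contra hcon
          exact he ((hwag _ (not_lt.1 hcon)).symm)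
        have htc : c ≤ t := by
          have hcast : ((N:ℝ) + 1) ≤ (⌊(t + τ) / h⌋ : ℝ) := by
            have : (N + 1 : ℤ) ≤ ⌊(t + τ) / h⌋ := hN'
            exact_mod_cast this
          have hfl : (⌊(t + τ) / h⌋ : ℝ) ≤ (t + τ) / h := Int.floor_le _
          have : ((N:ℝ) + 1) * h ≤ t + τ := by
            rw [← le_div_iff₀ hh]; linarith
          rw [hc_def]; linarith
        rw [Set.indicator_of_mem (mem_Ici.mpr htc)]
        have h1 := hbound τ t
        rwa [abs_of_nonneg (le_trans hc0.le htc)] at h1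
    have hmono := integral_mono (hint τ) hGint hle
    have hGval : ∫ t : ℝ, (Ici c).indicator (fun t : ℝ => 4 * Real.exp (-a * t)) t
        = 4 * (Real.exp (-a * c) / a) := by
      rw [integral_indicator measurableSet_Ici, integral_Ici_eq_integral_Ioi,
        integral_const_mul, myexp_integral ha]
    have hdle : dInt h (fun t => u ⌊(t + τ) / h⌋) (fun t => w ⌊(t + τ) / h⌋)
        ≤ (4 / Real.log 4) * Real.exp (-a * c) := by
      have hstep := mul_le_mul_of_nonneg_left (hmono.trans_eq hGval)
        (by positivity : (0:ℝ) ≤ 1 / h)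
      calc dInt h (fun t => u ⌊(t + τ) / h⌋) (fun t => w ⌊(t + τ) / h⌋)
          = (1 / h) * ∫ t : ℝ, (1 / 4 ^ (⌊t / h⌋.natAbs) : ℝ) *
            (if u ⌊(t + τ) / h⌋ = w ⌊(t + τ) / h⌋ then (0:ℝ) else 1) := rfl
        _ ≤ (1 / h) * (4 * (Real.exp (-a * c) / a)) := hstep
        _ = (4 / Real.log 4) * Real.exp (-a * c) := by
            rw [← hha]; field_simp
    have hCc : (4 / Real.log 4) * Real.exp (-a * c) ≤ (4 / Real.log 4) * Real.exp (-a * C) := by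
      apply mul_le_mul_of_nonneg_left _ (by positivity)
      apply Real.exp_le_exp.2
      nlinarith
    linarith
  case _ =>
    refine ⟨i₀ * h - τ, ?_, ?_⟩
    · have hi₀r : ((N:ℝ) + 1) ≤ (i₀:ℝ) := by exact_mod_cast hi₀N
      have : c ≤ i₀ * h - τ := by rw [hc_def]; nlinarith
      linarith
    · set t₀ : ℝ := i₀ * h - τ with ht₀
      have hkey : ∀ s : ℝ, ⌊(s + t₀ + τ) / h⌋ = ⌊s / h⌋ + i₀ := by
        intro s
        have e : (s + t₀ + τ) / h = s / h + i₀ := by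
          rw [ht₀]; field_simp; ring
        rw [e, Int.floor_add_intCast]
      have hlow : ∀ s : ℝ, (Ico (0:ℝ) h).indicator (fun _ => (1:ℝ)) s ≤
          (1 / 4 ^ (⌊s / h⌋.natAbs) : ℝ) *
            (if u ⌊(s + t₀ + τ) / h⌋ = w ⌊(s + t₀ + τ) / h⌋ then (0:ℝ) else 1) := by
        intro s
        by_cases hs : s ∈ Ico (0:ℝ) h
        · rw [Set.indicator_of_mem hs]
          have hfl : ⌊s / h⌋ = 0 := by
            rw [Int.floor_eq_zero_iff]
            exact ⟨div_nonneg hs.1 hh.le, (div_lt_one hh).2 hs.2⟩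
          rw [hkey s, hfl]
          simp only [Int.natAbs_zero, pow_zero, zero_add]
          rw [if_neg (fun e => hwne e.symm)]
          norm_num
        · rw [Set.indicator_of_notMem hs]
          have h0 := hnonneg (t₀ + τ) s
          have e : s + (t₀ + τ) = s + t₀ + τ := by ring
          rwa [e] at h0
      have hIind : Integrable ((Ico (0:ℝ) h).indicator (fun _ : ℝ => (1:ℝ))) := by
        apply IntegrableOn.integrable_indicator _ measurableSet_Ico
        refine integrableOn_const ?_
        rw [Real.volume_Ico]
        exact ENNReal.ofReal_ne_top
      have hF1int : Integrable (fun s : ℝ =>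
          (1 / 4 ^ (⌊s / h⌋.natAbs) : ℝ) *
            (if u ⌊(s + t₀ + τ) / h⌋ = w ⌊(s + t₀ + τ) / h⌋ then (0:ℝ) else 1)) := by
        have h0 := hint (t₀ + τ)
        have e : (fun s : ℝ =>
            (1 / 4 ^ (⌊s / h⌋.natAbs) : ℝ) *
              (if u ⌊(s + (t₀ + τ)) / h⌋ = w ⌊(s + (t₀ + τ)) / h⌋ then (0:ℝ) else 1))
            = (fun s : ℝ =>
            (1 / 4 ^ (⌊s / h⌋.natAbs) : ℝ) *
              (if u ⌊(s + t₀ + τ) / h⌋ = w ⌊(s + t₀ + τ) / h⌋ then (0:ℝ) else 1)) := by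
          funext s; rw [add_assoc]
        rwa [e] at h0
      have hmono2 := integral_mono hIind hF1int hlow
      have hindval : ∫ s : ℝ, (Ico (0:ℝ) h).indicator (fun _ => (1:ℝ)) s = h := by
        rw [integral_indicator_const (1:ℝ) measurableSet_Ico]
        simp [Real.volume_Ico, ENNReal.toReal_ofReal hh.le, hh.le]
      have heq : dInt h (psiFlow t₀ (fun t => u ⌊(t + τ) / h⌋))
          (psiFlow t₀ (fun t => w ⌊(t + τ) / h⌋))
          = (1 / h) * ∫ s : ℝ, (1 / 4 ^ (⌊s / h⌋.natAbs) : ℝ) *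
            (if u ⌊(s + t₀ + τ) / h⌋ = w ⌊(s + t₀ + τ) / h⌋ then (0:ℝ) else 1) := rfl
      rw [heq]
      have h1 : h ≤ ∫ s : ℝ, (1 / 4 ^ (⌊s / h⌋.natAbs) : ℝ) *
          (if u ⌊(s + t₀ + τ) / h⌋ = w ⌊(s + t₀ + τ) / h⌋ then (0:ℝ) else 1) := by
        calc h = ∫ s : ℝ, (Ico (0:ℝ) h).indicator (fun _ => (1:ℝ)) s := hindval.symm
          _ ≤ _ := hmono2
      have h2 := mul_le_mul_of_nonneg_left h1 (by positivity : (0:ℝ) ≤ 1 / h)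
      have h3 : (1 / h) * h = 1 := by field_simp
      linarith
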